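/- arXiv:2512.00848 — 5 statements merged into one kernel-verified Lean document; each statement's English description precedes it below -/
import Mathlib

section
/- For every a < s₁ < s₂ < b, the evolute satisfies the integral identity γ̃(s₂) − γ̃(s₁) = ∫_{s₁}^{s₂} ((R(s) − R(s₂))/R(s)) · γ'(s) ds + (R(s₂) − R(s₁)) · ν(s₁). -/
open Set Real Topology Filter
open scoped NNReal

noncomputable section

/-- The Euclidean plane. -/
abbrev Plane := EuclideanSpace ℝ (Fin 2)

/-- Rotation of a plane vector by `+π/2`. -/
def Jrot (v : Plane) : Plane := WithLp.toLp 2 ![-(v 1), v 0]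

local notation "⟪" x ", " y "⟫" => @inner ℝ _ _ x y

/-- `Jrot` as a linear map. -/
def JL : Plane →ₗ[ℝ] Plane where
  toFun := Jrot
  map_add' x y := by
    ext i; fin_cases i <;> · simp [Jrot]; try ring
  map_smul' c x := by
    ext i; fin_cases i <;> · simp [Jrot]; try ring

/-- `Jrot` as a continuous linear map. -/
def JC : Plane →L[ℝ] Plane := LinearMap.toContinuousLinearMap JL

lemma JC_apply (v : Plane) : JC v = Jrot v := rfl

lemma Jrot_Jrot (v : Plane) : Jrot (Jrot v) = -v := by
  ext i; fin_cases i <;> simp [Jrot]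

lemma inner_two (x y : Plane) : ⟪x, y⟫ = x 0 * y 0 + x 1 * y 1 := by
  simp [PiLp.inner_apply, Fin.sum_univ_two, RCLike.inner_apply]; ring

lemma decompose (v w : Plane) (hv : ⟪v, v⟫ = 1) (ho : ⟪v, w⟫ = 0) :
    w = ⟪w, Jrot v⟫ • Jrot v := by
  rw [inner_two] at hv ho
  rw [inner_two]
  ext i; fin_cases i
  · show w 0 = _
    simp only [Jrot, PiLp.toLp_apply, PiLp.smul_apply, Fin.mk_zero, Fin.mk_one, Matrix.cons_val_zero,
      Matrix.cons_val_one, Matrix.head_cons, smul_eq_mul]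
    linear_combination v 0 * ho - w 0 * hv
  · show w 1 = _
    simp only [Jrot, PiLp.toLp_apply, PiLp.smul_apply, Fin.mk_zero, Fin.mk_one, Matrix.cons_val_zero,
      Matrix.cons_val_one, Matrix.head_cons, smul_eq_mul]
    linear_combination v 1 * ho - w 1 * hv

/-- the integral identity for increments of the evolute. -/
theorem evolute_integral_identity
    (a b : ℝ) (hab : a < b) (γ ν ev : ℝ → Plane) (κ R : ℝ → ℝ)
    (hγ : ContDiffOn ℝ 2 γ (Ioo a b))
    (harc : ∀ s ∈ Ioo a b, ‖deriv γ s‖ = 1)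
    (hν : ∀ s, ν s = Jrot (deriv γ s))
    (hκdef : ∀ s, κ s = ⟪deriv (deriv γ) s, ν s⟫)
    (hκ : ∀ s ∈ Ioo a b, κ s ≠ 0)
    (hR : ∀ s, R s = (κ s)⁻¹)
    (hev : ∀ s, ev s = γ s + R s • ν s)
    (s₁ s₂ : ℝ) (h1 : a < s₁) (h12 : s₁ < s₂) (h2 : s₂ < b) :
    ev s₂ - ev s₁ =
      (∫ s in s₁..s₂, ((R s - R s₂) / R s) • deriv γ s) + (R s₂ - R s₁) • ν s₁ := by
  have hU : IsOpen (Ioo a b) := isOpen_Ioo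
  -- basic differentiability
  have hγd : ∀ s ∈ Ioo a b, HasDerivAt γ (deriv γ s) s := fun s hs =>
    ((hγ.differentiableOn (by norm_num)).differentiableAt (hU.mem_nhds hs)).hasDerivAt
  have hg1 : ContDiffOn ℝ 1 (deriv γ) (Ioo a b) :=
    hγ.deriv_of_isOpen hU (by norm_num)
  have hgd : ∀ s ∈ Ioo a b, HasDerivAt (deriv γ) (deriv (deriv γ) s) s := fun s hs =>
    ((hg1.differentiableOn one_ne_zero).differentiableAt (hU.mem_nhds hs)).hasDerivAt
  have hgcont : ContinuousOn (deriv γ) (Ioo a b) := hg1.continuousOn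
  have hwcont : ContinuousOn (deriv (deriv γ)) (Ioo a b) :=
    (hγ.deriv_of_isOpen hU (by norm_num) : ContDiffOn ℝ 1 (deriv γ) (Ioo a b)).continuousOn_deriv_of_isOpen hU le_rfl
  -- unit speed
  have hvv : ∀ s ∈ Ioo a b, ⟪deriv γ s, deriv γ s⟫ = 1 := by
    intro s hs
    rw [real_inner_self_eq_norm_mul_norm, harc s hs, one_mul]
  -- orthogonality of acceleration and velocity
  have horth : ∀ s ∈ Ioo a b, ⟪deriv γ s, deriv (deriv γ) s⟫ = 0 := by
    intro s hs
    have hD : HasDerivAt (fun t => ⟪deriv γ t, deriv γ t⟫)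
        (⟪deriv γ s, deriv (deriv γ) s⟫ + ⟪deriv (deriv γ) s, deriv γ s⟫) s :=
      (hgd s hs).inner ℝ (hgd s hs)
    have hconst : HasDerivAt (fun t => ⟪deriv γ t, deriv γ t⟫) 0 s := by
      have heq : (fun t => ⟪deriv γ t, deriv γ t⟫) =ᶠ[𝓝 s] fun _ => (1 : ℝ) := by
        filter_upwards [hU.mem_nhds hs] with t ht using hvv t ht
      exact (hasDerivAt_const s (1 : ℝ)).congr_of_eventuallyEq heq
    have h := hD.unique hconst
    rw [real_inner_comm]
    linarith [real_inner_comm (deriv γ s) (deriv (deriv γ) s), h]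
  -- acceleration is κ • ν
  have hsnd : ∀ s ∈ Ioo a b, deriv (deriv γ) s = κ s • ν s := by
    intro s hs
    rw [hκdef, hν]
    exact decompose _ _ (hvv s hs) (horth s hs)
  -- derivative of ν
  have hνd : ∀ s ∈ Ioo a b, HasDerivAt ν (-(κ s) • deriv γ s) s := by
    intro s hs
    have h1 : HasDerivAt (fun t => JC (deriv γ t)) (JC (deriv (deriv γ) s)) s :=
      JC.hasFDerivAt.comp_hasDerivAt s (hgd s hs)
    have hfun : ν = fun t => JC (deriv γ t) := funext fun t => (hν t).trans (JC_apply _).symm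
    rw [hfun]
    convert h1 using 1
    rw [hsnd s hs, hν, map_smul, JC_apply, Jrot_Jrot]
    module
  -- inclusion of the interval
  have hsub : uIcc s₁ s₂ ⊆ Ioo a b := by
    rw [uIcc_of_le h12.le]
    exact fun x hx => ⟨lt_of_lt_of_le h1 hx.1, lt_of_le_of_lt hx.2 h2⟩
  have hRne : ∀ s ∈ Ioo a b, R s ≠ 0 := by
    intro s hs; rw [hR]; exact inv_ne_zero (hκ s hs)
  -- F and its derivative
  set F : ℝ → Plane := fun s => γ s + R s₂ • ν s with hFdef
  have hF : ∀ s ∈ uIcc s₁ s₂, HasDerivAt F (((R s - R s₂) / R s) • deriv γ s) s := by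
    intro s hs
    have hsU : s ∈ Ioo a b := hsub hs
    have hd : HasDerivAt F (deriv γ s + R s₂ • (-(κ s) • deriv γ s)) s :=
      (hγd s hsU).add ((hνd s hsU).const_smul (R s₂))
    convert hd using 1
    have hks : κ s = (R s)⁻¹ := by rw [hR, inv_inv]
    have hscal : (R s - R s₂) / R s = 1 - R s₂ * κ s := by
      rw [hks]
      field_simp [hRne s hsU]
    rw [hscal]
    module
  -- integrability of the integrand
  have hκcont : ContinuousOn κ (Ioo a b) := by
    have : κ = fun s => ⟪deriv (deriv γ) s, JC (deriv γ s)⟫ :=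
      funext fun s => by rw [hκdef, hν, JC_apply]
    rw [this]
    exact hwcont.inner (JC.continuous.comp_continuousOn hgcont)
  have hRcont : ContinuousOn R (Ioo a b) := by
    have : R = fun s => (κ s)⁻¹ := funext hR
    rw [this]
    exact hκcont.inv₀ hκ
  have hint : IntervalIntegrable (fun s => ((R s - R s₂) / R s) • deriv γ s)
      MeasureTheory.volume s₁ s₂ := by
    apply ContinuousOn.intervalIntegrable
    exact (((hRcont.mono hsub).sub continuousOn_const).div (hRcont.mono hsub)
      (fun x hx => hRne x (hsub hx))).smul (hgcont.mono hsub)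
  have key : ∫ s in s₁..s₂, ((R s - R s₂) / R s) • deriv γ s = F s₂ - F s₁ :=
    intervalIntegral.integral_eq_sub_of_hasDerivAt hF hint
  rw [key, hev s₂, hev s₁, hFdef]
  simp only
  module
end
end

section
/- Suppose R is strictly increasing on (a,b) and let [c,d] ⊂ (a,b) be a compact subinterval. Then there is a constant C > 0 such that for all s₁, s₂ ∈ [c,d]: |⟨γ̃(s₂) − γ̃(s₁), ν(s₁)⟩ − (R(s₂) − R(s₁))| ≤ C |R(s₂) − R(s₁)| · |s₂ − s₁|², and |⟨γ̃(s₂) − γ̃(s₁), γ'(s₁)⟩| ≤ C |R(s₂) − R(s₁)| · |s₂ − s₁|. -/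
open Set Real Topology Filter
open scoped NNReal

noncomputable section

local notation "⟪" x ", " y "⟫" => @inner ℝ _ _ x y

/-- second-order estimates for the components of increments of the
evolute in the moving frame, uniformly on compact subintervals. -/
theorem evolute_component_estimates
    (a b : ℝ) (hab : a < b) (γ ν ev : ℝ → Plane) (κ R : ℝ → ℝ)
    (hγ : ContDiffOn ℝ 2 γ (Ioo a b))
    (harc : ∀ s ∈ Ioo a b, ‖deriv γ s‖ = 1)
    (hν : ∀ s, ν s = Jrot (deriv γ s))
    (hκdef : ∀ s, κ s = ⟪deriv (deriv γ) s, ν s⟫)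
    (hκ : ∀ s ∈ Ioo a b, κ s ≠ 0)
    (hR : ∀ s, R s = (κ s)⁻¹)
    (hev : ∀ s, ev s = γ s + R s • ν s)
    (hmono : StrictMonoOn R (Ioo a b))
    (c d : ℝ) (hcd : c ≤ d) (hsub : Icc c d ⊆ Ioo a b) :
    ∃ C > 0, ∀ s₁ ∈ Icc c d, ∀ s₂ ∈ Icc c d,
      |⟪ev s₂ - ev s₁, ν s₁⟫ - (R s₂ - R s₁)| ≤ C * |R s₂ - R s₁| * |s₂ - s₁| ^ 2 ∧
      |⟪ev s₂ - ev s₁, deriv γ s₁⟫| ≤ C * |R s₂ - R s₁| * |s₂ - s₁| := by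
  have hopen : IsOpen (Ioo a b) := isOpen_Ioo
  -- inner product in coordinates
  have hinner : ∀ x y : Plane, ⟪x, y⟫ = x 0 * y 0 + x 1 * y 1 := by
    intro x y
    simp [PiLp.inner_apply, Fin.sum_univ_two, RCLike.inner_apply, mul_comm]
  have hJ0 : ∀ v : Plane, Jrot v 0 = -(v 1) := fun v => rfl
  have hJ1 : ∀ v : Plane, Jrot v 1 = v 0 := fun v => rfl
  -- basic differentiability
  have hγd : ∀ t ∈ Ioo a b, HasDerivAt γ (deriv γ t) t := fun t ht =>
    ((hγ.differentiableOn (by norm_num)).differentiableAt (hopen.mem_nhds ht)).hasDerivAt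
  have hcomp : ∀ (f : ℝ → Plane) (f' : Plane) (t : ℝ) (i : Fin 2),
      HasDerivAt f f' t → HasDerivAt (fun u => f u i) (f' i) t := by
    intro f f' t i hf
    have h := ((EuclideanSpace.proj i : Plane →L[ℝ] ℝ).hasFDerivAt
      (x := f t)).comp_hasDerivAt t hf
    exact h
  have hγ'cd : ContDiffOn ℝ 1 (deriv γ) (Ioo a b) :=
    hγ.deriv_of_isOpen hopen (by norm_num)
  have hγ'd : ∀ t ∈ Ioo a b, HasDerivAt (deriv γ) (deriv (deriv γ) t) t := fun t ht =>
    ((hγ'cd.differentiableOn (by norm_num)).differentiableAt (hopen.mem_nhds ht)).hasDerivAt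
  have hγ'c : ContinuousOn (deriv γ) (Ioo a b) := hγ'cd.continuousOn
  have hγ''c : ContinuousOn (deriv (deriv γ)) (Ioo a b) :=
    hγ'cd.continuousOn_deriv_of_isOpen hopen le_rfl
  -- components
  set p : ℝ → ℝ := fun t => deriv γ t 0 with hpdef
  set q : ℝ → ℝ := fun t => deriv γ t 1 with hqdef
  have hpd : ∀ t ∈ Ioo a b, HasDerivAt p (deriv (deriv γ) t 0) t := fun t ht =>
    hcomp _ _ t 0 (hγ'd t ht)
  have hqd : ∀ t ∈ Ioo a b, HasDerivAt q (deriv (deriv γ) t 1) t := fun t ht =>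
    hcomp _ _ t 1 (hγ'd t ht)
  have hunit : ∀ t ∈ Ioo a b, p t ^ 2 + q t ^ 2 = 1 := by
    intro t ht
    have h1 : ⟪deriv γ t, deriv γ t⟫ = 1 := by
      rw [real_inner_self_eq_norm_sq, harc t ht]; norm_num
    rw [hinner] at h1
    simpa [pow_two] using h1
  have hκc : ∀ t, κ t = deriv (deriv γ) t 1 * p t - deriv (deriv γ) t 0 * q t := by
    intro t
    rw [hκdef, hinner, hν, hJ0, hJ1]
    ring
  have horth : ∀ t ∈ Ioo a b,
      p t * deriv (deriv γ) t 0 + q t * deriv (deriv γ) t 1 = 0 := by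
    intro t ht
    have heq : (fun u => p u ^ 2 + q u ^ 2) =ᶠ[𝓝 t] fun _ => (1 : ℝ) :=
      Filter.eventuallyEq_of_mem (hopen.mem_nhds ht) hunit
    have h0 : HasDerivAt (fun u => p u ^ 2 + q u ^ 2) 0 t :=
      (hasDerivAt_const t (1 : ℝ)).congr_of_eventuallyEq heq
    have h1 : HasDerivAt (fun u => p u ^ 2 + q u ^ 2)
        (2 * p t * deriv (deriv γ) t 0 + 2 * q t * deriv (deriv γ) t 1) t := by
      have := ((hpd t ht).pow 2).add ((hqd t ht).pow 2)
      exact this.congr_deriv (by norm_num)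
    have := h1.unique h0
    linarith
  have hp' : ∀ t ∈ Ioo a b, deriv (deriv γ) t 0 = -(κ t * q t) := by
    intro t ht
    have h1 := hκc t
    have h2 := horth t ht
    have h3 := hunit t ht
    linear_combination q t * h1 + p t * h2 - deriv (deriv γ) t 0 * h3
  have hq' : ∀ t ∈ Ioo a b, deriv (deriv γ) t 1 = κ t * p t := by
    intro t ht
    have h1 := hκc t
    have h2 := horth t ht
    have h3 := hunit t ht
    linear_combination (-(p t)) * h1 + q t * h2 - deriv (deriv γ) t 1 * h3
  have hκR : ∀ t ∈ Ioo a b, κ t * R t = 1 := by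
    intro t ht
    rw [hR]
    field_simp [hκ t ht]
  -- key derivative computation
  have key : ∀ (w : Plane) (r : ℝ), ∀ t ∈ Ioo a b,
      HasDerivAt (fun u => ⟪γ u, w⟫ + r * ⟪ν u, w⟫)
        (κ t * (R t - r) * ⟪deriv γ t, w⟫) t := by
    intro w r t ht
    have hx : HasDerivAt (fun u => γ u 0) (p t) t := hcomp _ _ t 0 (hγd t ht)
    have hy : HasDerivAt (fun u => γ u 1) (q t) t := hcomp _ _ t 1 (hγd t ht)
    have hD : HasDerivAt
        (fun u => (γ u 0 * w 0 + γ u 1 * w 1) + r * (-(q u) * w 0 + p u * w 1))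
        ((p t * w 0 + q t * w 1) +
          r * (-(deriv (deriv γ) t 1) * w 0 + deriv (deriv γ) t 0 * w 1)) t := by
      exact ((hx.mul_const _).add (hy.mul_const _)).add
        ((((hqd t ht).neg.mul_const _).add ((hpd t ht).mul_const _)).const_mul r)
    have heq : (fun u => (γ u 0 * w 0 + γ u 1 * w 1) + r * (-(q u) * w 0 + p u * w 1))
        = fun u => ⟪γ u, w⟫ + r * ⟪ν u, w⟫ := by
      funext u
      rw [hinner, hinner, hν, hJ0, hJ1]
    rw [heq] at hD
    convert hD using 1
    rw [hinner, hq' t ht, hp' t ht]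
    have h4 := hκR t ht
    linear_combination (p t * w 0 + q t * w 1) * h4
  -- continuity of the integrand ingredients
  have hpc : ContinuousOn p (Ioo a b) :=
    (EuclideanSpace.proj (0 : Fin 2)).continuous.comp_continuousOn hγ'c
  have hqc : ContinuousOn q (Ioo a b) :=
    (EuclideanSpace.proj (1 : Fin 2)).continuous.comp_continuousOn hγ'c
  have hp''c : ContinuousOn (fun t => deriv (deriv γ) t 0) (Ioo a b) :=
    (EuclideanSpace.proj (0 : Fin 2)).continuous.comp_continuousOn hγ''c
  have hq''c : ContinuousOn (fun t => deriv (deriv γ) t 1) (Ioo a b) :=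
    (EuclideanSpace.proj (1 : Fin 2)).continuous.comp_continuousOn hγ''c
  have hκcont : ContinuousOn κ (Ioo a b) := by
    have : ContinuousOn (fun t => deriv (deriv γ) t 1 * p t - deriv (deriv γ) t 0 * q t)
        (Ioo a b) := (hq''c.mul hpc).sub (hp''c.mul hqc)
    exact this.congr fun t _ => hκc t
  have hRcont : ContinuousOn R (Ioo a b) := by
    have : ContinuousOn (fun t => (κ t)⁻¹) (Ioo a b) := hκcont.inv₀ hκ
    exact this.congr fun t _ => hR t
  -- FTC
  have ftc : ∀ (w : Plane), ∀ s₁ ∈ Icc c d, ∀ s₂ ∈ Icc c d,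
      (⟪γ s₂, w⟫ + R s₂ * ⟪ν s₂, w⟫) - (⟪γ s₁, w⟫ + R s₂ * ⟪ν s₁, w⟫)
        = ∫ t in s₁..s₂, κ t * (R t - R s₂) * ⟪deriv γ t, w⟫ := by
    intro w s₁ h₁ s₂ h₂
    have husub : uIcc s₁ s₂ ⊆ Ioo a b := (uIcc_subset_Icc h₁ h₂).trans hsub
    have hcont : ContinuousOn (fun t => κ t * (R t - R s₂) * ⟪deriv γ t, w⟫) (uIcc s₁ s₂) := by
      apply ContinuousOn.mul
      · exact (hκcont.mono husub).mul ((hRcont.mono husub).sub continuousOn_const)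
      · exact (hγ'c.mono husub).inner continuousOn_const
    exact (intervalIntegral.integral_eq_sub_of_hasDerivAt
      (fun t ht => key w (R s₂) t (husub ht)) hcont.intervalIntegrable).symm
  -- decomposition of increments
  have hdecomp : ∀ (w : Plane) (s₁ s₂ : ℝ),
      ⟪ev s₂ - ev s₁, w⟫
        = ((⟪γ s₂, w⟫ + R s₂ * ⟪ν s₂, w⟫) - (⟪γ s₁, w⟫ + R s₂ * ⟪ν s₁, w⟫))
          + (R s₂ - R s₁) * ⟪ν s₁, w⟫ := by
    intro w s₁ s₂
    rw [hev, hev]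
    simp only [inner_sub_left, inner_add_left, real_inner_smul_left]
    ring
  -- norms of frame vectors
  have hνν : ∀ s ∈ Ioo a b, ⟪ν s, ν s⟫ = 1 := by
    intro s hs
    rw [hinner, hν, hJ0, hJ1]
    have := hunit s hs
    nlinarith [this]
  have hνγ' : ∀ s, ⟪ν s, deriv γ s⟫ = 0 := by
    intro s
    rw [hinner, hν, hJ0, hJ1]
    ring
  have hνnorm : ∀ s ∈ Ioo a b, ‖ν s‖ = 1 := by
    intro s hs
    have h1 : ‖ν s‖ ^ 2 = 1 := by rw [← real_inner_self_eq_norm_sq]; exact hνν s hs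
    nlinarith [norm_nonneg (ν s)]
  -- bounds
  obtain ⟨K, hK⟩ := (isCompact_Icc).exists_bound_of_continuousOn (hκcont.mono hsub)
  obtain ⟨M, hM⟩ := (isCompact_Icc).exists_bound_of_continuousOn (hγ''c.mono hsub)
  have hcmem : c ∈ Icc c d := left_mem_Icc.mpr hcd
  have hK0 : 0 ≤ K := le_trans (norm_nonneg _) (hK c hcmem)
  have hM0 : 0 ≤ M := le_trans (norm_nonneg _) (hM c hcmem)
  -- Lipschitz bound on deriv γ
  have hlip : ∀ t ∈ Icc c d, ∀ s₁ ∈ Icc c d,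
      ‖deriv γ t - deriv γ s₁‖ ≤ M * |t - s₁| := by
    intro t ht s₁ h₁
    have := (convex_Icc c d).norm_image_sub_le_of_norm_hasDerivWithin_le
      (f' := deriv (deriv γ)) (fun x hx => (hγ'd x (hsub hx)).hasDerivWithinAt)
      hM h₁ ht
    simpa [Real.norm_eq_abs] using this
  refine ⟨K * M + K + 1, by positivity, ?_⟩
  intro s₁ h₁ s₂ h₂
  have h₁' : s₁ ∈ Ioo a b := hsub h₁
  have h₂' : s₂ ∈ Ioo a b := hsub h₂
  -- monotone bound
  have hRmid : ∀ t ∈ uIcc s₁ s₂, |R t - R s₂| ≤ |R s₂ - R s₁| := by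
    intro t ht
    have htcd : t ∈ Icc c d := uIcc_subset_Icc h₁ h₂ ht
    have ht' : t ∈ Ioo a b := hsub htcd
    have mono := hmono.monotoneOn
    rcases le_total s₁ s₂ with hle | hle
    · rw [uIcc_of_le hle] at ht
      have e1 : R s₁ ≤ R t := mono h₁' ht' ht.1
      have e2 : R t ≤ R s₂ := mono ht' h₂' ht.2
      rw [abs_of_nonpos (by linarith), abs_of_nonneg (by linarith)]
      linarith
    · rw [uIcc_of_ge hle] at ht
      have e1 : R s₂ ≤ R t := mono h₂' ht' ht.1
      have e2 : R t ≤ R s₁ := mono ht' h₁' ht.2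
      rw [abs_of_nonneg (by linarith), abs_of_nonpos (by linarith)]
      linarith
  have habsK : ∀ t ∈ uIcc s₁ s₂, |κ t| ≤ K := by
    intro t ht
    have htcd : t ∈ Icc c d := uIcc_subset_Icc h₁ h₂ ht
    simpa [Real.norm_eq_abs] using hK t htcd
  constructor
  · -- first estimate, w = ν s₁
    have hd := hdecomp (ν s₁) s₁ s₂
    rw [ftc (ν s₁) s₁ h₁ s₂ h₂] at hd
    rw [hνν s₁ h₁', mul_one] at hd
    have hLHS : ⟪ev s₂ - ev s₁, ν s₁⟫ - (R s₂ - R s₁)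
        = ∫ t in s₁..s₂, κ t * (R t - R s₂) * ⟪deriv γ t, ν s₁⟫ := by linarith
    rw [hLHS, ← Real.norm_eq_abs]
    have hbound : ∀ t ∈ Set.uIoc s₁ s₂,
        ‖κ t * (R t - R s₂) * ⟪deriv γ t, ν s₁⟫‖
          ≤ K * |R s₂ - R s₁| * (M * |s₂ - s₁|) := by
      intro t ht
      have ht' : t ∈ uIcc s₁ s₂ := uIoc_subset_uIcc ht
      have htcd : t ∈ Icc c d := uIcc_subset_Icc h₁ h₂ ht'
      have hin : |⟪deriv γ t, ν s₁⟫| ≤ M * |s₂ - s₁| := by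
        have hzero : ⟪deriv γ s₁, ν s₁⟫ = 0 := by
          rw [real_inner_comm]; exact hνγ' s₁
        have e0 : ⟪deriv γ t, ν s₁⟫ = ⟪deriv γ t - deriv γ s₁, ν s₁⟫ := by
          rw [inner_sub_left, hzero, sub_zero]
        rw [e0]
        calc |⟪deriv γ t - deriv γ s₁, ν s₁⟫|
            ≤ ‖deriv γ t - deriv γ s₁‖ * ‖ν s₁‖ := abs_real_inner_le_norm _ _
          _ = ‖deriv γ t - deriv γ s₁‖ := by rw [hνnorm s₁ h₁', mul_one]
          _ ≤ M * |t - s₁| := hlip t htcd s₁ h₁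
          _ ≤ M * |s₂ - s₁| := by
              have := abs_sub_left_of_mem_uIcc ht'
              exact mul_le_mul_of_nonneg_left this hM0
      rw [Real.norm_eq_abs, abs_mul, abs_mul]
      exact mul_le_mul (mul_le_mul (habsK t ht') (hRmid t ht') (abs_nonneg _) hK0)
        hin (abs_nonneg _) (mul_nonneg hK0 (abs_nonneg _))
    have hX2 : 0 ≤ |R s₂ - R s₁| * |s₂ - s₁| ^ 2 :=
      mul_nonneg (abs_nonneg _) (sq_nonneg _)
    calc ‖∫ t in s₁..s₂, κ t * (R t - R s₂) * ⟪deriv γ t, ν s₁⟫‖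
        ≤ K * |R s₂ - R s₁| * (M * |s₂ - s₁|) * |s₂ - s₁| :=
          intervalIntegral.norm_integral_le_of_norm_le_const hbound
      _ ≤ (K * M + K + 1) * |R s₂ - R s₁| * |s₂ - s₁| ^ 2 := by
          nlinarith [mul_nonneg hK0 hX2, hX2]
  · -- second estimate, w = deriv γ s₁
    have hd := hdecomp (deriv γ s₁) s₁ s₂
    rw [ftc (deriv γ s₁) s₁ h₁ s₂ h₂] at hd
    rw [hνγ' s₁, mul_zero, add_zero] at hd
    rw [hd, ← Real.norm_eq_abs]
    have hbound : ∀ t ∈ Set.uIoc s₁ s₂,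
        ‖κ t * (R t - R s₂) * ⟪deriv γ t, deriv γ s₁⟫‖
          ≤ K * |R s₂ - R s₁| * 1 := by
      intro t ht
      have ht' : t ∈ uIcc s₁ s₂ := uIoc_subset_uIcc ht
      have htcd : t ∈ Icc c d := uIcc_subset_Icc h₁ h₂ ht'
      have ht'' : t ∈ Ioo a b := hsub htcd
      have hin : |⟪deriv γ t, deriv γ s₁⟫| ≤ 1 := by
        calc |⟪deriv γ t, deriv γ s₁⟫| ≤ ‖deriv γ t‖ * ‖deriv γ s₁‖ :=
              abs_real_inner_le_norm _ _
          _ = 1 := by rw [harc t ht'', harc s₁ h₁', mul_one]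
      rw [Real.norm_eq_abs, abs_mul, abs_mul]
      exact mul_le_mul (mul_le_mul (habsK t ht') (hRmid t ht') (abs_nonneg _) hK0)
        hin (abs_nonneg _) (mul_nonneg hK0 (abs_nonneg _))
    have hX : 0 ≤ |R s₂ - R s₁| * |s₂ - s₁| :=
      mul_nonneg (abs_nonneg _) (abs_nonneg _)
    calc ‖∫ t in s₁..s₂, κ t * (R t - R s₂) * ⟪deriv γ t, deriv γ s₁⟫‖
        ≤ K * |R s₂ - R s₁| * 1 * |s₂ - s₁| :=
          intervalIntegral.norm_integral_le_of_norm_le_const hbound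
      _ ≤ (K * M + K + 1) * |R s₂ - R s₁| * |s₂ - s₁| := by
          nlinarith [mul_nonneg (mul_nonneg hK0 hM0) hX, hX]
end
end

section
/- Let f be m times continuously differentiable on an open interval I, let s₁ ∈ I, suppose f^{(j)}(s₁) = 0 for 1 ≤ j ≤ m−1 and f^{(m)}(t) ≥ c > 0 for all t ∈ I. Then: (1) for every 0 ≤ j ≤ m−1 and every s ∈ I with s ≥ s₁, f^{(m−j)}(s) ≥ (c/j!)·(s − s₁)^j ≥ 0; and (2) for all s, s′ ∈ I with s₁ ≤ s < s′, f(s′) − f(s) ≥ c·(s′ − s)^m / m!. -/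
open Set Real

noncomputable section

lemma aux_iteratedDerivWithin_eq {I : Set ℝ} (hIopen : IsOpen I) {f : ℝ → ℝ} (k : ℕ)
    {x : ℝ} (hx : x ∈ I) : iteratedDerivWithin k f I x = iteratedDeriv k f x := by
  rw [iteratedDerivWithin, iteratedDeriv, iteratedFDerivWithin_of_isOpen k hIopen hx]

lemma aux_differentiableAt {I : Set ℝ} (hIopen : IsOpen I) {f : ℝ → ℝ} {m k : ℕ}
    (hf : ContDiffOn ℝ m f I) (hk : k < m) {x : ℝ} (hx : x ∈ I) :
    DifferentiableAt ℝ (iteratedDeriv k f) x := by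
  have h1 : DifferentiableWithinAt ℝ (iteratedDerivWithin k f I) I x :=
    hf.differentiableOn_iteratedDerivWithin (by exact_mod_cast hk) hIopen.uniqueDiffOn x hx
  have h2 : DifferentiableAt ℝ (iteratedDerivWithin k f I) x :=
    h1.differentiableAt (hIopen.mem_nhds hx)
  exact h2.congr_of_eventuallyEq <|
    Filter.eventuallyEq_of_mem (hIopen.mem_nhds hx) fun y hy =>
      (aux_iteratedDerivWithin_eq hIopen k hy).symm

/-- lower bounds for the derivatives and increments of a function
whose intermediate derivatives vanish at `s₁` and whose `m`-th derivative is
bounded below by `c > 0` on an open interval. -/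
theorem deriv_and_increment_lower_bounds
    (I : Set ℝ) (hIopen : IsOpen I) (hIconn : I.OrdConnected)
    (f : ℝ → ℝ) (m : ℕ) (hm : 1 ≤ m) (c : ℝ) (hc : 0 < c)
    (s₁ : ℝ) (hs₁ : s₁ ∈ I)
    (hf : ContDiffOn ℝ m f I)
    (hvanish : ∀ j : ℕ, 1 ≤ j → j ≤ m - 1 → iteratedDeriv j f s₁ = 0)
    (hlower : ∀ t ∈ I, c ≤ iteratedDeriv m f t) :
    (∀ j : ℕ, j ≤ m - 1 → ∀ s ∈ I, s₁ ≤ s →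
      0 ≤ c / (Nat.factorial j) * (s - s₁) ^ j ∧
      c / (Nat.factorial j) * (s - s₁) ^ j ≤ iteratedDeriv (m - j) f s) ∧
    (∀ s ∈ I, ∀ s' ∈ I, s₁ ≤ s → s < s' →
      c * (s' - s) ^ m / (Nat.factorial m) ≤ f s' - f s) := by
  have hIconv : Convex ℝ I := convex_iff_ordConnected.mpr hIconn
  -- main inductive claim
  have key : ∀ j : ℕ, j ≤ m - 1 → ∀ s ∈ I, s₁ ≤ s →
      c / (Nat.factorial j) * (s - s₁) ^ j ≤ iteratedDeriv (m - j) f s := by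
    intro j
    induction j with
    | zero =>
      intro _ s hs _
      simpa using hlower s hs
    | succ j ih =>
      intro hj s hs hss
      have hjm : j ≤ m - 1 := le_trans (Nat.le_succ j) hj
      have hjm' : j + 1 < m := by omega
      -- the auxiliary function
      set g : ℝ → ℝ := fun t => iteratedDeriv (m - (j + 1)) f t
        - c / (Nat.factorial (j + 1)) * (t - s₁) ^ (j + 1) with hg
      have hsub : m - (j + 1) + 1 = m - j := by omega
      have hdiffg : ∀ x ∈ I, DifferentiableAt ℝ g x := fun x hx =>
        (aux_differentiableAt hIopen hf (by omega) hx).sub (by fun_prop)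
      have hderivg : ∀ x ∈ I, deriv g x
          = iteratedDeriv (m - j) f x - c / (Nat.factorial j) * (x - s₁) ^ j := by
        intro x hx
        have h1 : deriv (fun t => iteratedDeriv (m - (j + 1)) f t) x
            = iteratedDeriv (m - j) f x := by
          rw [← hsub, iteratedDeriv_succ]
        have h2 : deriv (fun t => c / (Nat.factorial (j + 1)) * (t - s₁) ^ (j + 1)) x
            = c / (Nat.factorial j) * (x - s₁) ^ j := by
          rw [deriv_const_mul _ (by fun_prop)]
          have : deriv (fun t : ℝ => (t - s₁) ^ (j + 1)) x = (j + 1) * (x - s₁) ^ j := by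
            have := ((hasDerivAt_id x).sub_const s₁).pow (j + 1)
            simpa using this.deriv
          rw [this]
          have hfac : (Nat.factorial (j + 1) : ℝ) = (j + 1) * Nat.factorial j := by
            push_cast [Nat.factorial_succ]; ring
          field_simp [hfac]
          rw [hfac]; ring
        rw [hg, deriv_fun_sub (hdiffg x hx |>.congr_of_eventuallyEq (by rfl) |> fun _ =>
          aux_differentiableAt hIopen hf (by omega) hx) (by fun_prop), h1, h2]
      -- monotonicity on D = I ∩ Ici s₁
      set D : Set ℝ := I ∩ Ici s₁ with hD
      have hDconv : Convex ℝ D := hIconv.inter (convex_Ici s₁)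
      have hintD : interior D ⊆ I ∩ Ioi s₁ := by
        rw [hD, interior_inter, hIopen.interior_eq, interior_Ici]
      have hmono : MonotoneOn g D := by
        apply monotoneOn_of_deriv_nonneg hDconv
        · exact fun x hx => ((hdiffg x hx.1).continuousAt).continuousWithinAt
        · intro x hx
          exact ((hdiffg x (hintD hx).1).differentiableWithinAt)
        · intro x hx
          rcases hintD hx with ⟨hxI, hxgt⟩
          rw [hderivg x hxI]
          have := ih hjm x hxI (le_of_lt hxgt)
          linarith
      have hgs₁ : g s₁ = 0 := by
        have : iteratedDeriv (m - (j + 1)) f s₁ = 0 :=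
          hvanish _ (by omega) (by omega)
        simp [hg, this]
      have := hmono ⟨hs₁, le_refl s₁⟩ ⟨hs, hss⟩ hss
      rw [hgs₁] at this
      have : 0 ≤ iteratedDeriv (m - (j + 1)) f s
          - c / (Nat.factorial (j + 1)) * (s - s₁) ^ (j + 1) := this
      linarith
  constructor
  · intro j hj s hs hss
    refine ⟨?_, key j hj s hs hss⟩
    exact mul_nonneg (by positivity) (pow_nonneg (by linarith) j)
  · intro s hs s' hs' hss hss'
    -- derivative lower bound with j = m - 1
    have hm1 : m - (m - 1) = 1 := by omega
    have hder : ∀ t ∈ I, s ≤ t →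
        c / (Nat.factorial (m - 1)) * (t - s) ^ (m - 1) ≤ deriv f t := by
      intro t ht hst
      have h1 := key (m - 1) le_rfl t ht (le_trans hss hst)
      rw [hm1, iteratedDeriv_one] at h1
      have h2 : (t - s) ^ (m - 1) ≤ (t - s₁) ^ (m - 1) :=
        pow_le_pow_left₀ (by linarith) (by linarith) _
      have h3 : 0 < c / (Nat.factorial (m - 1) : ℝ) := by positivity
      nlinarith
    set h : ℝ → ℝ := fun t => f t - c / (Nat.factorial m) * (t - s) ^ m with hh
    have hdifff : ∀ x ∈ I, DifferentiableAt ℝ f x := by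
      intro x hx
      have := aux_differentiableAt hIopen hf (k := 0) (by omega) hx
      simpa [iteratedDeriv_zero] using this
    have hdiffh : ∀ x ∈ I, DifferentiableAt ℝ h x := fun x hx =>
      (hdifff x hx).sub (by fun_prop)
    have hderivh : ∀ x ∈ I, deriv h x
        = deriv f x - c / (Nat.factorial m) * (m * (x - s) ^ (m - 1)) := by
      intro x hx
      rw [hh, deriv_fun_sub (hdifff x hx) (by fun_prop), deriv_const_mul _ (by fun_prop)]
      congr 1
      have := ((hasDerivAt_id x).sub_const s).pow m
      simpa [mul_comm] using congrArg (fun z => c / (Nat.factorial m) * z) this.deriv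
    set D : Set ℝ := I ∩ Ici s with hD
    have hDconv : Convex ℝ D := hIconv.inter (convex_Ici s)
    have hintD : interior D ⊆ I ∩ Ioi s := by
      rw [hD, interior_inter, hIopen.interior_eq, interior_Ici]
    have hmono : MonotoneOn h D := by
      apply monotoneOn_of_deriv_nonneg hDconv
      · exact fun x hx => ((hdiffh x hx.1).continuousAt).continuousWithinAt
      · exact fun x hx => (hdiffh x (hintD hx).1).differentiableWithinAt
      · intro x hx
        rcases hintD hx with ⟨hxI, hxgt⟩
        rw [hderivh x hxI]
        have h1 := hder x hxI (le_of_lt hxgt)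
        have hfac : c / (Nat.factorial m) * (m * (x - s) ^ (m - 1))
            = c / (Nat.factorial (m - 1)) * (x - s) ^ (m - 1) := by
          have : (Nat.factorial m : ℝ) = m * Nat.factorial (m - 1) := by
            conv_lhs => rw [show m = (m - 1) + 1 by omega]
            push_cast [Nat.factorial_succ]
            have : ((m : ℝ) - 1) + 1 = m := by push_cast; ring
            rw [show ((m - 1 : ℕ) : ℝ) + 1 = (m : ℝ) by push_cast [Nat.cast_sub hm]; ring]
          rw [this]
          have hm0 : (m : ℝ) ≠ 0 := by positivity
          field_simp
        rw [hfac]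
        linarith
    have := hmono ⟨hs, le_refl s⟩ ⟨hs', le_of_lt hss'⟩ (le_of_lt hss')
    have hhs : h s = f s := by simp [hh, zero_pow (by omega : m ≠ 0)]
    rw [hhs] at this
    have : f s ≤ f s' - c / (Nat.factorial m) * (s' - s) ^ m := this
    have heq : c * (s' - s) ^ m / (Nat.factorial m)
        = c / (Nat.factorial m) * (s' - s) ^ m := by ring
    linarith [heq ▸ this]
end
end

section
/- Suppose γ (in its arclength parametrization) is of class C³ on (a,b), with κ(s) ≠ 0 and κ'(s) ≠ 0 for all s ∈ (a,b). Then the evolute, in its arclength parametrization γ̃₁ = γ̃ ∘ R⁻¹, has signed curvature at the parameter value R(s) equal to −κ(s)³ / κ'(s). -/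
open Set Real Topology Filter
open scoped NNReal

noncomputable section

local notation "⟪" x ", " y "⟫" => @inner ℝ _ _ x y

lemma Jrot_apply0 (v : Plane) : Jrot v 0 = -(v 1) := rfl
lemma Jrot_apply1 (v : Plane) : Jrot v 1 = v 0 := rfl

lemma inner_eq (v w : Plane) : ⟪v, w⟫ = v 0 * w 0 + v 1 * w 1 := by
  simp [PiLp.inner_apply, Fin.sum_univ_two, RCLike.inner_apply]; ring

lemma Jrot_add (x y : Plane) : Jrot (x + y) = Jrot x + Jrot y := by
  ext i; fin_cases i <;> simp [Jrot_apply0, Jrot_apply1]; ring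

lemma Jrot_smul (c : ℝ) (x : Plane) : Jrot (c • x) = c • Jrot x := by
  ext i; fin_cases i <;> simp [Jrot_apply0, Jrot_apply1]

lemma decomp (v w : Plane) (hv : ‖v‖ = 1) (hw : ⟪w, v⟫ = 0) :
    w = ⟪w, Jrot v⟫ • Jrot v := by
  have hvv : v 0 * v 0 + v 1 * v 1 = 1 := by
    have := real_inner_self_eq_norm_sq v
    rw [hv, inner_eq] at this; linarith
  rw [inner_eq] at hw
  ext i; fin_cases i <;>
    simp [Jrot_apply0, Jrot_apply1, inner_eq] <;>
    [linear_combination v 0 * hw - w 0 * hvv; linear_combination v 1 * hw - w 1 * hvv]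

/-- `Jrot` as a continuous linear map. -/
def Jlm : Plane →L[ℝ] Plane :=
  LinearMap.toContinuousLinearMap
    { toFun := Jrot
      map_add' := Jrot_add
      map_smul' := fun c x => by simpa using Jrot_smul c x }

lemma Jlm_apply (v : Plane) : Jlm v = Jrot v := rfl

/-- the signed curvature of the evolute, in its arclength
parametrization `ev ∘ R⁻¹`, at the parameter value `R s` equals `-κ(s)³/κ'(s)`. -/
theorem evolute_curvature_formula
    (a b : ℝ) (hab : a < b) (γ ν ev : ℝ → Plane) (κ R : ℝ → ℝ)
    (hγ : ContDiffOn ℝ 2 γ (Ioo a b))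
    (harc : ∀ s ∈ Ioo a b, ‖deriv γ s‖ = 1)
    (hν : ∀ s, ν s = Jrot (deriv γ s))
    (hκdef : ∀ s, κ s = ⟪deriv (deriv γ) s, ν s⟫)
    (hκ : ∀ s ∈ Ioo a b, κ s ≠ 0)
    (hR : ∀ s, R s = (κ s)⁻¹)
    (hev : ∀ s, ev s = γ s + R s • ν s)
    (hγ3 : ContDiffOn ℝ 3 γ (Ioo a b))
    (hκ' : ∀ s ∈ Ioo a b, deriv κ s ≠ 0)
    (ψ : ℝ → ℝ) (hψ : ∀ s ∈ Ioo a b, ψ (R s) = s) :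
    ∀ s ∈ Ioo a b,
      ⟪deriv (deriv (ev ∘ ψ)) (R s), Jrot (deriv (ev ∘ ψ) (R s))⟫ =
        -(κ s) ^ 3 / deriv κ s := by
  have hIo : IsOpen (Ioo a b) := isOpen_Ioo
  set T : ℝ → Plane := deriv γ with hTdef
  set G : ℝ → Plane := deriv T with hGdef
  have hT2 : ContDiffOn ℝ 2 T (Ioo a b) := hγ3.deriv_of_isOpen hIo (by norm_num)
  have hG1 : ContDiffOn ℝ 1 G (Ioo a b) := hT2.deriv_of_isOpen hIo (by norm_num)
  have hνfun : ν = fun x => Jlm (T x) := funext fun x => by rw [hν x, Jlm_apply]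
  have hν2 : ContDiffOn ℝ 2 ν (Ioo a b) := by
    rw [hνfun]; exact Jlm.contDiff.comp_contDiffOn hT2
  have hκfun : κ = fun x => ⟪G x, ν x⟫ := funext hκdef
  have hκ1 : ContDiffOn ℝ 1 κ (Ioo a b) := by
    rw [hκfun]; exact hG1.inner ℝ (hν2.of_le one_le_two)
  -- pointwise derivatives
  have hγd : ∀ u ∈ Ioo a b, HasDerivAt γ (T u) u := fun u hu =>
    (((hγ3.contDiffAt (hIo.mem_nhds hu)).differentiableAt (by norm_num)).hasDerivAt)
  have hTd : ∀ u ∈ Ioo a b, HasDerivAt T (G u) u := fun u hu =>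
    (((hT2.contDiffAt (hIo.mem_nhds hu)).differentiableAt (by norm_num)).hasDerivAt)
  have hνd : ∀ u ∈ Ioo a b, HasDerivAt ν (Jlm (G u)) u := fun u hu => by
    rw [hνfun]; exact Jlm.hasFDerivAt.comp_hasDerivAt u (hTd u hu)
  have hκd : ∀ u ∈ Ioo a b, HasDerivAt κ (deriv κ u) u := fun u hu =>
    ((hκ1.contDiffAt (hIo.mem_nhds hu)).differentiableAt (by norm_num)).hasDerivAt
  set Rd : ℝ → ℝ := fun u => -(deriv κ u) / κ u ^ 2 with hRddef
  have hRfun : R = fun x => (κ x)⁻¹ := funext hR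
  have hRd : ∀ u ∈ Ioo a b, HasDerivAt R (Rd u) u := fun u hu => by
    rw [hRfun]; exact (hκd u hu).inv (hκ u hu)
  have hRdne : ∀ u ∈ Ioo a b, Rd u ≠ 0 := fun u hu =>
    div_ne_zero (neg_ne_zero.mpr (hκ' u hu)) (pow_ne_zero 2 (hκ u hu))
  have hRstrict : ∀ u ∈ Ioo a b, HasStrictDerivAt R (Rd u) u := fun u hu => by
    have h1 : ContDiffAt ℝ 1 R u := by
      rw [hRfun]; exact (hκ1.contDiffAt (hIo.mem_nhds hu)).inv (hκ u hu)
    have h2 := h1.hasStrictDerivAt one_ne_zero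
    rwa [(hRd u hu).deriv] at h2
  have hψd : ∀ u ∈ Ioo a b, HasStrictDerivAt ψ (Rd u)⁻¹ (R u) := fun u hu => by
    have hev0 : ∀ᶠ x in 𝓝 u, ψ (R x) = x := by
      filter_upwards [hIo.mem_nhds hu] with x hx using hψ x hx
    exact (hRstrict u hu).to_local_left_inverse (hRdne u hu) hev0
  -- orthogonality and curvature decomposition
  have horth : ∀ u ∈ Ioo a b, ⟪G u, T u⟫ = 0 := by
    intro u hu
    have h1 : (fun x => ⟪T x, T x⟫) =ᶠ[𝓝 u] fun _ => (1 : ℝ) := by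
      filter_upwards [hIo.mem_nhds hu] with x hx
      rw [real_inner_self_eq_norm_sq, harc x hx]; norm_num
    have h2 : HasDerivAt (fun x => ⟪T x, T x⟫) (⟪T u, G u⟫ + ⟪G u, T u⟫) u :=
      (hTd u hu).inner ℝ (hTd u hu)
    have h3 : HasDerivAt (fun x => ⟪T x, T x⟫) 0 u :=
      (hasDerivAt_const u (1 : ℝ)).congr_of_eventuallyEq h1
    have h4 := h2.unique h3
    rw [real_inner_comm (G u) (T u)] at h4; linarith
  have hGdecomp : ∀ u ∈ Ioo a b, G u = κ u • ν u := fun u hu => by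
    have := decomp (T u) (G u) (harc u hu) (horth u hu)
    rw [← hν u, ← hκdef u] at this; exact this
  -- derivative of the evolute
  have hevd : ∀ u ∈ Ioo a b, HasDerivAt ev (Rd u • ν u) u := by
    intro u hu
    have h4 : HasDerivAt (fun x => γ x + R x • ν x)
        (T u + (R u • Jlm (G u) + Rd u • ν u)) u :=
      (hγd u hu).add ((hRd u hu).smul (hνd u hu))
    have hevfun : ev = fun x => γ x + R x • ν x := funext hev
    have h5 : T u + (R u • Jlm (G u) + Rd u • ν u) = Rd u • ν u := by
      have h6 : Jlm (G u) = κ u • -(T u) := by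
        rw [hGdecomp u hu, Jlm_apply, Jrot_smul, hν u, Jrot_Jrot]
      rw [h6, smul_smul, hR u, inv_mul_cancel₀ (hκ u hu), one_smul]
      abel
    rw [hevfun]; rwa [h5] at h4
  -- derivative of ev ∘ ψ
  have hevψ : ∀ u ∈ Ioo a b, HasDerivAt (ev ∘ ψ) (ν u) (R u) := by
    intro u hu
    have h1 : HasDerivAt ev (Rd u • ν u) (ψ (R u)) := by rw [hψ u hu]; exact hevd u hu
    have h2 := h1.scomp (R u) (hψd u hu).hasDerivAt
    rwa [smul_smul, inv_mul_cancel₀ (hRdne u hu), one_smul] at h2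
  intro s hs
  have hmap : map R (𝓝 s) = 𝓝 (R s) := (hRstrict s hs).map_nhds_eq (hRdne s hs)
  have hevψ2 : deriv (ev ∘ ψ) =ᶠ[𝓝 (R s)] ν ∘ ψ := by
    rw [Filter.EventuallyEq, ← hmap, eventually_map]
    filter_upwards [hIo.mem_nhds hs] with u hu
    rw [(hevψ u hu).deriv, Function.comp_apply, hψ u hu]
  have hd2 : deriv (deriv (ev ∘ ψ)) (R s) = ((Rd s)⁻¹ * κ s) • -(T s) := by
    rw [hevψ2.deriv_eq]
    have h1 : HasDerivAt ν (Jlm (G s)) (ψ (R s)) := by rw [hψ s hs]; exact hνd s hs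
    have h2 := h1.scomp (R s) (hψd s hs).hasDerivAt
    rw [h2.deriv]
    rw [hGdecomp s hs, Jlm_apply, Jrot_smul, hν s, Jrot_Jrot, smul_smul]
  have hd1 : deriv (ev ∘ ψ) (R s) = ν s := (hevψ s hs).deriv
  rw [hd1, hd2, hν s, Jrot_Jrot]
  rw [inner_smul_left, inner_neg_neg, real_inner_self_eq_norm_sq, harc s hs]
  have hκs := hκ s hs
  have hκ's := hκ' s hs
  simp only [hRddef, conj_trivial, one_pow, mul_one]
  field_simp
end
end

section
/- The involute of a smooth curve, when it is a regular curve, has no double point: let β : (a,b) → ℝ² be infinitely differentiable and parametrized by arclength with nonvanishing curvature, let c ∈ ℝ, and define the involute γ(s) := β(s) + (c − s)·β'(s). If γ'(s) ≠ 0 for all s ∈ (a,b) (equivalently, (c − s)β''(s) ≠ 0 for all s), then γ is injective. -/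
open Set Real Topology Filter
open scoped NNReal

noncomputable section

local notation "⟪" x ", " y "⟫" => @inner ℝ _ _ x y

/-- the involute `γ s = β s + (c - s) • β' s` of a smooth
arclength-parametrized curve `β` with nonvanishing curvature is injective
whenever it is regular. -/
theorem involute_injective
    (a b c : ℝ) (hab : a < b) (β : ℝ → Plane)
    (hβ : ContDiffOn ℝ (⊤ : ℕ∞) β (Ioo a b))
    (harc : ∀ s ∈ Ioo a b, ‖deriv β s‖ = 1)
    (hκ : ∀ s ∈ Ioo a b, ⟪deriv (deriv β) s, Jrot (deriv β s)⟫ ≠ (0 : ℝ))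
    (hreg : ∀ s ∈ Ioo a b, deriv (fun u => β u + (c - u) • deriv β u) s ≠ 0) :
    InjOn (fun s => β s + (c - s) • deriv β s) (Ioo a b) := by
  set γ : ℝ → Plane := fun s => β s + (c - s) • deriv β s with hγdef
  have hopen : IsOpen (Ioo a b) := isOpen_Ioo
  have hβ' : ContDiffOn ℝ (⊤ : ℕ∞) (deriv β) (Ioo a b) := hβ.deriv_of_isOpen hopen (by exact_mod_cast le_top)
  have hder : ∀ s ∈ Ioo a b, HasDerivAt β (deriv β s) s := fun s hs =>
    ((hβ.differentiableOn (by simp)).differentiableAt (hopen.mem_nhds hs)).hasDerivAt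
  have hder2 : ∀ s ∈ Ioo a b, HasDerivAt (deriv β) (deriv (deriv β) s) s := fun s hs =>
    ((hβ'.differentiableOn (by simp)).differentiableAt (hopen.mem_nhds hs)).hasDerivAt
  have hγder : ∀ s ∈ Ioo a b, HasDerivAt γ ((c - s) • deriv (deriv β) s) s := by
    intro s hs
    have hcs : HasDerivAt (fun u : ℝ => c - u) (-1 : ℝ) s := (hasDerivAt_id s).const_sub c
    have h1 : HasDerivAt (fun u => (c - u) • deriv β u)
        ((c - s) • deriv (deriv β) s + (-1 : ℝ) • deriv β s) s := hcs.smul (hder2 s hs)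
    have h2 := (hder s hs).add h1
    have e : deriv β s + ((c - s) • deriv (deriv β) s + (-1 : ℝ) • deriv β s) = (c - s) • deriv (deriv β) s := by
      rw [neg_one_smul, add_left_comm, add_neg_cancel, add_zero]
    rw [e] at h2
    exact h2
  -- c is not in the interval
  have hcnot : c ∉ Ioo a b := by
    intro hc
    refine hreg c hc ?_
    have h0 := (hγder c hc).deriv
    simpa using h0
  have hcc : c ≤ a ∨ b ≤ c := by
    rcases le_or_gt c a with h | h
    · exact Or.inl h
    rcases le_or_gt b c with h' | h'
    · exact Or.inr h'
    exact absurd ⟨h, h'⟩ hcnot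
  -- main argument
  have main : ∀ s1 s2, s1 ∈ Ioo a b → s2 ∈ Ioo a b → s1 < s2 → γ s1 ≠ γ s2 := by
    intro s1 s2 h1 h2 h12 hP
    set P : Plane := γ s1 with hPdef
    have hsub : Icc s1 s2 ⊆ Ioo a b := Icc_subset_Ioo h1.1 h2.2
    -- β is 1-Lipschitz on [s1, s2]
    have hlip : ∀ x ∈ Icc s1 s2, ∀ y ∈ Icc s1 s2, ‖β y - β x‖ ≤ |y - x| := by
      intro x hx y hy
      have := Convex.norm_image_sub_le_of_norm_hasDerivWithin_le
        (f := β) (f' := deriv β) (s := Icc s1 s2) (C := 1)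
        (fun u hu => (hder u (hsub hu)).hasDerivWithinAt)
        (fun u hu => le_of_eq (harc u (hsub hu))) (convex_Icc s1 s2) hx hy
      simpa [Real.norm_eq_abs] using this
    have hd1 : ‖P - β s1‖ = |c - s1| := by
      have : P - β s1 = (c - s1) • deriv β s1 := by simp [hPdef, hγdef]
      rw [this, norm_smul, harc s1 h1]
      simp [Real.norm_eq_abs]
    have hd2 : ‖P - β s2‖ = |c - s2| := by
      have : P - β s2 = (c - s2) • deriv β s2 := by rw [hP]; simp [hγdef]
      rw [this, norm_smul, harc s2 h2]
      simp [Real.norm_eq_abs]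
    -- distance to P along the curve
    have key : ∀ s ∈ Icc s1 s2, ‖P - β s‖ = |c - s| := by
      intro s hs
      have hs1 : a < s1 := h1.1
      have hs2 : s2 < b := h2.2
      have t1 : ‖P - β s‖ ≤ ‖P - β s1‖ + ‖β s1 - β s‖ := norm_sub_le_norm_sub_add_norm_sub _ _ _
      have t1' : ‖β s1 - β s‖ ≤ s - s1 := by
        have := hlip s hs s1 (left_mem_Icc.2 h12.le)
        rw [abs_of_nonpos (by linarith [hs.1])] at this
        linarith [this]
      have t2 : ‖P - β s2‖ ≤ ‖P - β s‖ + ‖β s - β s2‖ := norm_sub_le_norm_sub_add_norm_sub _ _ _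
      have t2' : ‖β s - β s2‖ ≤ s2 - s := by
        have := hlip s2 (right_mem_Icc.2 h12.le) s hs
        rw [abs_of_nonpos (by linarith [hs.2])] at this
        linarith [this]
      have t3 : ‖P - β s‖ ≤ ‖P - β s2‖ + ‖β s2 - β s‖ := norm_sub_le_norm_sub_add_norm_sub _ _ _
      have t3' : ‖β s2 - β s‖ ≤ s2 - s := by
        have := hlip s hs s2 (right_mem_Icc.2 h12.le)
        rw [abs_of_nonneg (by linarith [hs.2])] at this
        linarith [this]
      have t4 : ‖P - β s1‖ ≤ ‖P - β s‖ + ‖β s - β s1‖ := norm_sub_le_norm_sub_add_norm_sub _ _ _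
      have t4' : ‖β s - β s1‖ ≤ s - s1 := by
        have := hlip s1 (left_mem_Icc.2 h12.le) s hs
        rw [abs_of_nonneg (by linarith [hs.1])] at this
        linarith [this]
      rcases hcc with hca | hbc
      · -- c ≤ a : distances are s - c
        have e1 : |c - s1| = s1 - c := by rw [abs_of_nonpos (by linarith)]; ring
        have e2 : |c - s2| = s2 - c := by rw [abs_of_nonpos (by linarith [hs.2])]; ring
        have e3 : |c - s| = s - c := by rw [abs_of_nonpos (by linarith [hs.1])]; ring
        rw [e3]
        rw [e1] at hd1; rw [e2] at hd2
        have up : ‖P - β s‖ ≤ s - c := by rw [hd1] at t1; linarith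
        have lo : s - c ≤ ‖P - β s‖ := by rw [hd2] at t2; linarith
        linarith
      · -- b ≤ c : distances are c - s
        have e1 : |c - s1| = c - s1 := abs_of_nonneg (by linarith)
        have e2 : |c - s2| = c - s2 := abs_of_nonneg (by linarith [hs.2])
        have e3 : |c - s| = c - s := abs_of_nonneg (by linarith [hs.2])
        rw [e3]
        rw [e1] at hd1; rw [e2] at hd2
        have up : ‖P - β s‖ ≤ c - s := by rw [hd2] at t3; linarith
        have lo : c - s ≤ ‖P - β s‖ := by rw [hd1] at t4; linarith
        linarith
    -- on the open interval, γ is constant equal to P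
    have hconst : ∀ s ∈ Ioo s1 s2, γ s = P := by
      intro s hs
      have hsab : s ∈ Ioo a b := hsub (Ioo_subset_Icc_self hs)
      have heq : (fun u => ⟪P - β u, P - β u⟫) =ᶠ[𝓝 s] fun u => (c - u) ^ 2 := by
        filter_upwards [isOpen_Ioo.mem_nhds hs] with u hu
        rw [real_inner_self_eq_norm_sq, key u (Ioo_subset_Icc_self hu), sq_abs]
      have hE : HasDerivAt (fun u => P - β u) (-(deriv β s)) s := (hder s hsab).const_sub P
      have hI : HasDerivAt (fun u => ⟪P - β u, P - β u⟫)
          (⟪P - β s, -(deriv β s)⟫ + ⟪-(deriv β s), P - β s⟫) s := HasDerivAt.inner ℝ hE hE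
      have hQ : HasDerivAt (fun u : ℝ => (c - u) ^ 2)
          ((2 : ℕ) * (c - s) ^ 1 * (-1)) s := ((hasDerivAt_id s).const_sub c).pow 2
      have hI' : HasDerivAt (fun u => ⟪P - β u, P - β u⟫)
          ((2 : ℕ) * (c - s) ^ 1 * (-1)) s := hQ.congr_of_eventuallyEq heq
      have huniq := hI.unique hI'
      have hinner : ⟪deriv β s, P - β s⟫ = c - s := by
        rw [inner_neg_right, inner_neg_left, real_inner_comm] at huniq
        push_cast at huniq
        nlinarith [huniq]
      have hz : ‖(P - β s) - (c - s) • deriv β s‖ ^ 2 = 0 := by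
        rw [norm_sub_sq_real, key s (Ioo_subset_Icc_self hs), norm_smul, harc s hsab,
          real_inner_smul_right, real_inner_comm, hinner]
        simp [Real.norm_eq_abs, sq_abs]
        ring
      have hz' : (P - β s) - (c - s) • deriv β s = 0 := by
        have := (pow_eq_zero_iff (two_ne_zero)).mp hz
        exact norm_eq_zero.mp this
      have : P = β s + (c - s) • deriv β s := by
        rw [sub_sub] at hz'
        exact sub_eq_zero.mp hz'
      rw [hγdef]
      exact this.symm
    -- γ constant near the midpoint contradicts regularity
    set t : ℝ := (s1 + s2) / 2 with htdef
    have ht : t ∈ Ioo s1 s2 := ⟨by simp [htdef]; linarith, by simp [htdef]; linarith⟩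
    have htab : t ∈ Ioo a b := hsub (Ioo_subset_Icc_self ht)
    have hev : γ =ᶠ[𝓝 t] fun _ => P := by
      filter_upwards [isOpen_Ioo.mem_nhds ht] with u hu using hconst u hu
    refine hreg t htab ?_
    rw [hev.deriv_eq]
    simp
  intro x hx y hy hxy
  rcases lt_trichotomy x y with h | h | h
  · exact absurd hxy (main x y hx hy h)
  · exact h
  · exact absurd hxy.symm (main y x hy hx h)
end
end
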